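/- In the first-order language with one binary relation symbol E and two unary predicate symbols p and q, there is no formula φ(x) with one free variable such that for every finite structure G and every element u of G: G satisfies φ(u) if and only if |{v : E(u,v) and p(v)}| ≥ |{v : E(u,v) and q(v)}|. Consequently, the K^# formula #p − #q ≥ 0 is not expressible in first-order logic over finite pointed graphs. -/

import Mathlib

open scoped Classical

/-- A finite labeled directed graph: edges and a valuation of atomic
propositions (indexed by `ℕ`) at each vertex. -/
structure LGraph (V : Type) [Fintype V] where
  edge : V → V → Bool
  label : V → ℕ → Bool

mutual
/-- Formulas of the logic `K^#`. -/
inductive KForm : Type where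
  | atom : ℕ → KForm
  | not : KForm → KForm
  | or : KForm → KForm → KForm
  | ge0 : KExpr → KForm
/-- Expressions of the logic `K^#`. -/
inductive KExpr : Type where
  | const : ℤ → KExpr
  | ind : KForm → KExpr
  | count : KForm → KExpr
  | add : KExpr → KExpr → KExpr
  | scale : ℤ → KExpr → KExpr
end

mutual
/-- Truth of a `K^#` formula at a pointed graph. -/
def KForm.sat {V : Type} [Fintype V] (G : LGraph V) (u : V) : KForm → Bool
  | .atom p => G.label u p
  | .not φ => !(KForm.sat G u φ)
  | .or φ ψ => KForm.sat G u φ || KForm.sat G u ψ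
  | .ge0 E => decide (0 ≤ KExpr.val G u E)
/-- Value of a `K^#` expression at a pointed graph. -/
def KExpr.val {V : Type} [Fintype V] (G : LGraph V) (u : V) : KExpr → ℤ
  | .const c => c
  | .ind φ => if KForm.sat G u φ then 1 else 0
  | .count φ =>
      ((Finset.univ.filter (fun v => G.edge u v = true ∧ KForm.sat G v φ = true)).card : ℤ)
  | .add E₁ E₂ => KExpr.val G u E₁ + KExpr.val G u E₂
  | .scale c E => c * KExpr.val G u E
end

open FirstOrder FirstOrder.Language

/-- The first-order language with one binary relation symbol `E` and two unary
predicate symbols `p` and `q`. -/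
def sigLang : FirstOrder.Language where
  Functions := fun _ => Empty
  Relations := fun n =>
    match n with
    | 1 => Fin 2
    | 2 => Unit
    | _ => Empty

/-- The unary predicate symbol `p`. -/
def pSym : sigLang.Relations 1 := (0 : Fin 2)

/-- The unary predicate symbol `q`. -/
def qSym : sigLang.Relations 1 := (1 : Fin 2)

/-- The binary relation symbol `E`. -/
def eSym : sigLang.Relations 2 := Unit.unit

/-- A labeled graph, viewed as a first-order structure for `sigLang`: `p` is
proposition `0`, `q` is proposition `1`, and `E` is the edge relation. -/
def graphStruct {V : Type} [Fintype V] (G : LGraph V) : sigLang.Structure V where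
  funMap := fun {n} f _ => f.elim
  RelMap := fun {n} r v =>
    match n, r, v with
    | 1, r, v => if r = (0 : Fin 2) then G.label (v 0) 0 = true else G.label (v 0) 1 = true
    | 2, _, v => G.edge (v 0) (v 1) = true

/-- The `K^#` formula `#p − #q ≥ 0`, with `p` the proposition `0` and `q` the
proposition `1`. -/
def cmpForm : KForm :=
  KForm.ge0 (KExpr.add (KExpr.count (KForm.atom 0))
    (KExpr.scale (-1) (KExpr.count (KForm.atom 1))))

/- ===== auxiliary development ===== -/

abbrev SV (a b : ℕ) := Fin (1 + a + b)

/-- The star graph with a root `0`, `a` successors labeled `p` and `b` successors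
labeled `q`. -/
def starG (a b : ℕ) : LGraph (SV a b) where
  edge u v := decide (u.val = 0 ∧ v.val ≠ 0)
  label v k :=
    if k = 0 then decide (1 ≤ v.val ∧ v.val ≤ a)
    else if k = 1 then decide (a < v.val) else false

def starS (a b : ℕ) : sigLang.Structure (SV a b) := graphStruct (starG a b)

/-- The class (root / p / q) of a vertex value. -/
def cls (a : ℕ) (x : ℕ) : ℕ := if x = 0 then 0 else if x ≤ a then 1 else 2

lemma cls_eq_zero {a x : ℕ} : cls a x = 0 ↔ x = 0 := by
  unfold cls; split_ifs with h1 h2 <;> simp_all <;> omega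

lemma cls_eq_one {a x : ℕ} : cls a x = 1 ↔ (1 ≤ x ∧ x ≤ a) := by
  unfold cls; split_ifs with h1 h2 <;> simp_all <;> omega

lemma cls_eq_two {a x : ℕ} : cls a x = 2 ↔ a < x := by
  unfold cls; split_ifs with h1 h2 <;> simp_all <;> omega

lemma cls_cases (a x : ℕ) : cls a x = 0 ∨ cls a x = 1 ∨ cls a x = 2 := by
  unfold cls; split_ifs <;> simp

/-- Similarity of two assignments into two star structures. -/
def Sim {β : Type} {m m' : ℕ} (a a' : ℕ) (f : β → Fin m) (g : β → Fin m') : Prop :=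
  (∀ i, cls a (f i).val = cls a' (g i).val) ∧ (∀ i j, f i = f j ↔ g i = g j)

lemma Sim.symm {β : Type} {m m' : ℕ} {a a' : ℕ} {f : β → Fin m} {g : β → Fin m'}
    (h : Sim a a' f g) : Sim a' a g f :=
  ⟨fun i => (h.1 i).symm, fun i j => (h.2 i j).symm⟩

/-- Every term of `sigLang` is a variable. -/
lemma term_eq_var {β : Type*} (t : sigLang.Term β) : ∃ i, t = FirstOrder.Language.Term.var i := by
  cases t with
  | var i => exact ⟨i, rfl⟩
  | func f ts => exact f.elim

section cards

def pEquiv (a b : ℕ) : {v : SV a b // 1 ≤ v.val ∧ v.val ≤ a} ≃ Fin a where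
  toFun v := ⟨v.1.val - 1, by have h := v.2; omega⟩
  invFun i := ⟨⟨i.val + 1, by have := i.isLt; omega⟩, ⟨Nat.succ_le_succ (Nat.zero_le _), i.isLt⟩⟩
  left_inv := by
    rintro ⟨⟨x, hx⟩, h⟩
    apply Subtype.ext; apply Fin.ext
    simp at h ⊢; omega
  right_inv := by
    rintro ⟨i, hi⟩
    apply Fin.ext; simp

def qEquiv (a b : ℕ) : {v : SV a b // a < v.val} ≃ Fin b where
  toFun v := ⟨v.1.val - (a + 1), by have h := v.2; have := v.1.isLt; omega⟩
  invFun i := ⟨⟨a + 1 + i.val, by have := i.isLt; omega⟩, by show a < a + 1 + i.val; omega⟩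
  left_inv := by
    rintro ⟨⟨x, hx⟩, h⟩
    apply Subtype.ext; apply Fin.ext
    simp at h ⊢; omega
  right_inv := by
    rintro ⟨i, hi⟩
    apply Fin.ext; simp

lemma cardP (a b : ℕ) :
    (Finset.univ.filter (fun v : SV a b => 1 ≤ v.val ∧ v.val ≤ a)).card = a := by
  rw [← Fintype.card_subtype]
  rw [Fintype.card_congr (pEquiv a b), Fintype.card_fin]

lemma cardQ (a b : ℕ) :
    (Finset.univ.filter (fun v : SV a b => a < v.val)).card = b := by
  rw [← Fintype.card_subtype]
  rw [Fintype.card_congr (qEquiv a b), Fintype.card_fin]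

end cards

section relmaps

lemma starG_edge {a b : ℕ} (u v : SV a b) :
    (starG a b).edge u v = true ↔ (u.val = 0 ∧ v.val ≠ 0) := by
  simp [starG]

lemma starG_label0 {a b : ℕ} (v : SV a b) :
    (starG a b).label v 0 = true ↔ cls a v.val = 1 := by
  simp [starG, cls_eq_one]

lemma starG_label1 {a b : ℕ} (v : SV a b) :
    (starG a b).label v 1 = true ↔ cls a v.val = 2 := by
  simp [starG, cls_eq_two]

lemma relMap1 {a b : ℕ} (r : sigLang.Relations 1) (w : Fin 1 → SV a b) :
    @Structure.RelMap sigLang (SV a b) (starS a b) 1 r w ↔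
      cls a (w 0).val = (if r = (0 : Fin 2) then 1 else 2) := by
  show (if r = (0 : Fin 2) then (starG a b).label (w 0) 0 = true
      else (starG a b).label (w 0) 1 = true) ↔ _
  split_ifs with h
  · exact starG_label0 _
  · exact starG_label1 _

lemma relMap2 {a b : ℕ} (r : sigLang.Relations 2) (w : Fin 2 → SV a b) :
    @Structure.RelMap sigLang (SV a b) (starS a b) 2 r w ↔
      (cls a (w 0).val = 0 ∧ ¬ cls a (w 1).val = 0) := by
  show (starG a b).edge (w 0) (w 1) = true ↔ _
  rw [starG_edge]
  simp [cls_eq_zero]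

end relmaps

section ef

lemma fresh_elt {n m : ℕ} (g : Fin 1 ⊕ Fin n → Fin m) (s : Finset (Fin m))
    (hs : n + 2 ≤ s.card) : ∃ y ∈ s, ∀ i, g i ≠ y := by
  have h1 : (Finset.image g Finset.univ).card ≤ n + 1 := by
    refine le_trans Finset.card_image_le ?_
    simp [Nat.add_comm]
  have h2 : 0 < (s \ Finset.image g Finset.univ).card := by
    have := Finset.le_card_sdiff (Finset.image g Finset.univ) s
    omega
  obtain ⟨y, hy⟩ := Finset.card_pos.mp h2
  rw [Finset.mem_sdiff] at hy
  refine ⟨y, hy.1, fun i hi => hy.2 ?_⟩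
  exact Finset.mem_image.mpr ⟨i, Finset.mem_univ i, hi⟩

lemma sim_extend {a b a' b' n : ℕ}
    {v : Fin 1 → SV a b} {xs : Fin n → SV a b}
    {v' : Fin 1 → SV a' b'} {xs' : Fin n → SV a' b'} {x : SV a b} {y : SV a' b'}
    (h : Sim a a' (Sum.elim v xs) (Sum.elim v' xs'))
    (hcls : cls a x.val = cls a' y.val)
    (hx : ∀ i, Sum.elim v xs i = x ↔ Sum.elim v' xs' i = y) :
    Sim a a' (Sum.elim v (Fin.snoc xs x)) (Sum.elim v' (Fin.snoc xs' y)) := by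
  constructor
  · intro i
    rcases i with i | i
    · exact h.1 (Sum.inl i)
    · refine Fin.lastCases ?_ ?_ i
      · simpa using hcls
      · intro j; simpa using h.1 (Sum.inr j)
  · intro i j
    rcases i with i | i <;> rcases j with j | j
    · simpa using h.2 (Sum.inl i) (Sum.inl j)
    · refine Fin.lastCases ?_ ?_ j
      · simpa using hx (Sum.inl i)
      · intro j; simpa using h.2 (Sum.inl i) (Sum.inr j)
    · refine Fin.lastCases ?_ ?_ i
      · simpa [eq_comm] using hx (Sum.inl j)
      · intro i; simpa using h.2 (Sum.inr i) (Sum.inl j)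
    · refine Fin.lastCases ?_ ?_ i
      · refine Fin.lastCases ?_ ?_ j
        · simp
        · intro j; simpa [eq_comm] using hx (Sum.inr j)
      · intro i
        refine Fin.lastCases ?_ ?_ j
        · simpa using hx (Sum.inr i)
        · intro j; simpa using h.2 (Sum.inr i) (Sum.inr j)

lemma exists_match {a b a' b' n : ℕ} (ha : n + 2 ≤ a) (hb : n + 2 ≤ b)
    {v : Fin 1 → SV a b} {xs : Fin n → SV a b}
    {v' : Fin 1 → SV a' b'} {xs' : Fin n → SV a' b'}
    (hsim : Sim a a' (Sum.elim v xs) (Sum.elim v' xs')) (y : SV a' b') :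
    ∃ x : SV a b, Sim a a' (Sum.elim v (Fin.snoc xs x)) (Sum.elim v' (Fin.snoc xs' y)) := by
  by_cases hc : ∃ i, Sum.elim v' xs' i = y
  · obtain ⟨i, hi⟩ := hc
    refine ⟨Sum.elim v xs i, sim_extend hsim ?_ ?_⟩
    · rw [hsim.1 i, hi]
    · intro j
      rw [← hi]
      exact hsim.2 j i
  · push_neg at hc
    rcases cls_cases a' y.val with h0 | h1 | h2
    · -- y is the root
      refine ⟨⟨0, by omega⟩, sim_extend hsim ?_ ?_⟩
      · rw [h0]; rfl
      · intro j
        constructor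
        · intro hj
          exfalso
          have hcj : cls a' (Sum.elim v' xs' j).val = 0 := by
            rw [← hsim.1 j, hj]; rfl
          apply hc j
          apply Fin.ext
          rw [cls_eq_zero] at hcj h0
          rw [hcj, h0]
        · intro hj; exact absurd hj (hc j)
    · -- y is a p-vertex; find a fresh p-vertex on the left
      obtain ⟨x, hxs, hfr⟩ := fresh_elt (Sum.elim v xs)
        (Finset.univ.filter (fun v : SV a b => 1 ≤ v.val ∧ v.val ≤ a))
        (by rw [cardP]; exact ha)
      refine ⟨x, sim_extend hsim ?_ ?_⟩
      · rw [h1, cls_eq_one]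
        exact (Finset.mem_filter.mp hxs).2
      · intro j
        exact iff_of_false (hfr j) (hc j)
    · -- y is a q-vertex
      obtain ⟨x, hxs, hfr⟩ := fresh_elt (Sum.elim v xs)
        (Finset.univ.filter (fun v : SV a b => a < v.val))
        (by rw [cardQ]; exact hb)
      refine ⟨x, sim_extend hsim ?_ ?_⟩
      · rw [h2, cls_eq_two]
        exact (Finset.mem_filter.mp hxs).2
      · intro j
        exact iff_of_false (hfr j) (hc j)

end ef

lemma key {n : ℕ} (φ : sigLang.BoundedFormula (Fin 1) n) :
    ∃ K : ℕ, ∀ (a b a' b' : ℕ), K ≤ a → K ≤ b → K ≤ a' → K ≤ b' →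
      ∀ (v : Fin 1 → SV a b) (xs : Fin n → SV a b)
        (v' : Fin 1 → SV a' b') (xs' : Fin n → SV a' b'),
        Sim a a' (Sum.elim v xs) (Sum.elim v' xs') →
        (@BoundedFormula.Realize sigLang (SV a b) (starS a b) (Fin 1) n φ v xs ↔
         @BoundedFormula.Realize sigLang (SV a' b') (starS a' b') (Fin 1) n φ v' xs') := by
  induction φ with
  | falsum =>
    exact ⟨0, fun a b a' b' _ _ _ _ v xs v' xs' _ => by
      simp [BoundedFormula.Realize]⟩
  | equal t₁ t₂ =>
    refine ⟨0, fun a b a' b' _ _ _ _ v xs v' xs' hsim => ?_⟩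
    obtain ⟨i, rfl⟩ := term_eq_var t₁
    obtain ⟨j, rfl⟩ := term_eq_var t₂
    simp only [BoundedFormula.Realize, Term.realize]
    exact hsim.2 i j
  | rel R ts =>
    rename_i l
    refine ⟨0, fun a b a' b' _ _ _ _ v xs v' xs' hsim => ?_⟩
    choose k hk using fun i => term_eq_var (ts i)
    simp only [BoundedFormula.Realize, hk, Term.realize]
    clear hk
    rcases l with _ | _ | _ | l
    · cases R
    · rw [relMap1, relMap1, hsim.1 (k 0)]
    · rw [relMap2, relMap2, hsim.1 (k 0), hsim.1 (k 1)]
    · cases R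
  | imp φ ψ ih₁ ih₂ =>
    obtain ⟨K₁, h₁⟩ := ih₁
    obtain ⟨K₂, h₂⟩ := ih₂
    refine ⟨max K₁ K₂, fun a b a' b' ha hb ha' hb' v xs v' xs' hsim => ?_⟩
    simp only [BoundedFormula.realize_imp]
    exact imp_congr
      (h₁ a b a' b' (le_trans (le_max_left _ _) ha) (le_trans (le_max_left _ _) hb)
        (le_trans (le_max_left _ _) ha') (le_trans (le_max_left _ _) hb') v xs v' xs' hsim)
      (h₂ a b a' b' (le_trans (le_max_right _ _) ha) (le_trans (le_max_right _ _) hb)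
        (le_trans (le_max_right _ _) ha') (le_trans (le_max_right _ _) hb') v xs v' xs' hsim)
  | all ψ ih =>
    rename_i m
    obtain ⟨K, hK⟩ := ih
    refine ⟨max K (m + 2), fun a b a' b' ha hb ha' hb' v xs v' xs' hsim => ?_⟩
    have hKa := le_trans (le_max_left K (m+2)) ha
    have hKb := le_trans (le_max_left K (m+2)) hb
    have hKa' := le_trans (le_max_left K (m+2)) ha'
    have hKb' := le_trans (le_max_left K (m+2)) hb'
    have hna := le_trans (le_max_right K (m+2)) ha
    have hnb := le_trans (le_max_right K (m+2)) hb
    have hna' := le_trans (le_max_right K (m+2)) ha'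
    have hnb' := le_trans (le_max_right K (m+2)) hb'
    simp only [BoundedFormula.realize_all]
    constructor
    · intro h y
      obtain ⟨x, hsx⟩ := exists_match (v := v) (xs := xs) (v' := v') (xs' := xs') hna hnb hsim y
      exact (hK a b a' b' hKa hKb hKa' hKb' v _ v' _ hsx).mp (h x)
    · intro h x
      obtain ⟨y, hsy⟩ := exists_match (v := v') (xs := xs') (v' := v) (xs' := xs) hna' hnb' hsim.symm x
      exact (hK a b a' b' hKa hKb hKa' hKb' v _ v' _ hsy.symm).mpr (h y)

/-- The root of the star graph. -/
def rt (a b : ℕ) : SV a b := ⟨0, by omega⟩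

lemma sim_root (a b a' b' : ℕ) :
    Sim a a' (Sum.elim (fun _ : Fin 1 => rt a b) (default : Fin 0 → SV a b))
      (Sum.elim (fun _ : Fin 1 => rt a' b') (default : Fin 0 → SV a' b')) := by
  constructor
  · intro i
    rcases i with i | i
    · rfl
    · exact i.elim0
  · intro i j
    rcases i with i | i <;> rcases j with j | j
    · simp
    · exact j.elim0
    · exact i.elim0
    · exact j.elim0

lemma card_filter_iff {α : Type*} [Fintype α] (p q : α → Prop)
    [DecidablePred p] [DecidablePred q] (h : ∀ x, p x ↔ q x) :
    (Finset.univ.filter p).card = (Finset.univ.filter q).card := by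
  congr 1
  ext x
  simp [Finset.mem_filter, h x]

lemma natCardP (a b : ℕ) :
    Nat.card {v : SV a b //
        @Structure.RelMap sigLang (SV a b) (starS a b) 2 eSym ![rt a b, v] ∧
        @Structure.RelMap sigLang (SV a b) (starS a b) 1 pSym ![v]} = a := by
  rw [Nat.card_congr (Equiv.subtypeEquivRight (q := fun v : SV a b => 1 ≤ v.val ∧ v.val ≤ a)
    (fun v => ?_))]
  · exact Nat.card_eq_of_equiv_fin (pEquiv a b)
  · rw [relMap2, relMap1]
    simp only [Matrix.cons_val_zero, Matrix.cons_val_one, Matrix.head_cons]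
    show ((cls a (rt a b).val = 0 ∧ ¬cls a v.val = 0) ∧
      cls a v.val = if pSym = (0 : Fin 2) then 1 else 2) ↔ _
    have : (if pSym = (0 : Fin 2) then 1 else 2) = 1 := by
      rw [if_pos (show pSym = (0 : Fin 2) from rfl)]
    rw [this]
    have h0 : cls a (rt a b).val = 0 := rfl
    simp only [h0, cls_eq_zero, cls_eq_one, true_and]
    omega

lemma natCardQ (a b : ℕ) :
    Nat.card {v : SV a b //
        @Structure.RelMap sigLang (SV a b) (starS a b) 2 eSym ![rt a b, v] ∧
        @Structure.RelMap sigLang (SV a b) (starS a b) 1 qSym ![v]} = b := by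
  rw [Nat.card_congr (Equiv.subtypeEquivRight (q := fun v : SV a b => a < v.val)
    (fun v => ?_))]
  · exact Nat.card_eq_of_equiv_fin (qEquiv a b)
  · rw [relMap2, relMap1]
    simp only [Matrix.cons_val_zero, Matrix.cons_val_one, Matrix.head_cons]
    show ((cls a (rt a b).val = 0 ∧ ¬cls a v.val = 0) ∧
      cls a v.val = if qSym = (0 : Fin 2) then 1 else 2) ↔ _
    have : (if qSym = (0 : Fin 2) then 1 else 2) = 2 := by
      rw [if_neg (show qSym ≠ (0 : Fin 2) from (by decide : (1 : Fin 2) ≠ 0))]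
    rw [this]
    have h0 : cls a (rt a b).val = 0 := rfl
    simp only [h0, cls_eq_zero, cls_eq_two, true_and]
    omega

lemma satCmp (a b : ℕ) :
    KForm.sat (starG a b) (rt a b) cmpForm = true ↔ b ≤ a := by
  have hp : (Finset.univ.filter (fun v : SV a b =>
      (starG a b).edge (rt a b) v = true ∧ KForm.sat (starG a b) v (.atom 0) = true)).card = a := by
    rw [card_filter_iff _ (fun v : SV a b => 1 ≤ v.val ∧ v.val ≤ a) (fun v => ?_), cardP]
    rw [starG_edge]
    show ((rt a b).val = 0 ∧ v.val ≠ 0) ∧ (starG a b).label v 0 = true ↔ _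
    rw [starG_label0]
    have h0 : (rt a b).val = 0 := rfl
    simp only [h0, cls_eq_one, true_and]
    omega
  have hq : (Finset.univ.filter (fun v : SV a b =>
      (starG a b).edge (rt a b) v = true ∧ KForm.sat (starG a b) v (.atom 1) = true)).card = b := by
    rw [card_filter_iff _ (fun v : SV a b => a < v.val) (fun v => ?_), cardQ]
    rw [starG_edge]
    show ((rt a b).val = 0 ∧ v.val ≠ 0) ∧ (starG a b).label v 1 = true ↔ _
    rw [starG_label1]
    have h0 : (rt a b).val = 0 := rfl
    simp only [h0, cls_eq_two, true_and]
    omega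
  show decide (0 ≤ KExpr.val (starG a b) (rt a b) _) = true ↔ _
  simp only [KExpr.val, hp, hq, decide_eq_true_iff]
  omega
/-- No first-order formula `φ(x)` expresses, over finite structures, that `x` has at
least as many `E`-successors satisfying `p` as `E`-successors satisfying `q`;
consequently the `K^#` formula `#p − #q ≥ 0` is not expressible in first-order logic
over finite pointed graphs. -/
theorem no_FO_formula_for_count_comparison :
    (¬ ∃ φ : sigLang.Formula (Fin 1),
      ∀ (M : Type) [Fintype M] [sigLang.Structure M] (u : M),
        (φ.Realize (fun _ => u) ↔
          Nat.card {v : M // Structure.RelMap eSym ![u, v] ∧ Structure.RelMap pSym ![v]} ≥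
          Nat.card {v : M // Structure.RelMap eSym ![u, v] ∧ Structure.RelMap qSym ![v]})) ∧
    (¬ ∃ φ : sigLang.Formula (Fin 1),
      ∀ (n : ℕ) (G : LGraph (Fin n)) (u : Fin n),
        ((letI := graphStruct G; φ.Realize (fun _ => u)) ↔ KForm.sat G u cmpForm = true)) := by
  constructor
  · rintro ⟨φ, hφ⟩
    obtain ⟨K, hK⟩ := key φ
    have hiff := hK K K K (K + 1) le_rfl le_rfl le_rfl (by omega)
      (fun _ => rt K K) default (fun _ => rt K (K + 1)) default (sim_root K K K (K + 1))
    have h1 := @hφ (SV K K) _ (starS K K) (rt K K)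
    have h2 := @hφ (SV K (K + 1)) _ (starS K (K + 1)) (rt K (K + 1))
    rw [natCardP, natCardQ] at h1 h2
    have hr1 : @Formula.Realize sigLang (SV K K) (starS K K) _ φ (fun _ => rt K K) := by
      rw [h1]
    have hr2 := hiff.mp (by unfold Formula.Realize at hr1; convert hr1)
    have := h2.mp (by unfold Formula.Realize; convert hr2)
    omega
  · rintro ⟨φ, hφ⟩
    obtain ⟨K, hK⟩ := key φ
    have hiff := hK K K K (K + 1) le_rfl le_rfl le_rfl (by omega)
      (fun _ => rt K K) default (fun _ => rt K (K + 1)) default (sim_root K K K (K + 1))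
    have h1 := hφ (1 + K + K) (starG K K) (rt K K)
    have h2 := hφ (1 + K + (K + 1)) (starG K (K + 1)) (rt K (K + 1))
    rw [satCmp] at h1 h2
    have hr1 : @Formula.Realize sigLang (SV K K) (starS K K) _ φ (fun _ => rt K K) :=
      h1.mpr le_rfl
    have hr2 := hiff.mp (by unfold Formula.Realize at hr1; convert hr1)
    exact absurd (h2.mp (by unfold Formula.Realize; convert hr2; rfl)) (by omega)
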